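/- (Lemma A.1: variation of the IB objective at every order.) Let r : X × Z → ℝ satisfy ∑_z q(x,z) r(x,z) = 0 for every x. Then for every integer n ≥ 2, F is n times differentiable at ε = 0 and the n-th derivative of F at 0 equals (−1)ⁿ · (n−2)! · [ (∑_{x,z} p(x) q(x,z) r(x,z)ⁿ − ∑_z p(z) r̄(z)ⁿ) − β · (∑_{y,z} p(y,z) r̄(y,z)ⁿ − ∑_z p(z) r̄(z)ⁿ) ]. -/

import Mathlib

open Finset Filter Matrix

variable {X Y Z : Type*} [Fintype X] [Fintype Y] [Fintype Z]

/-- marginal p(x) = ∑_y p(x,y) -/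
noncomputable def pX (p : X → Y → ℝ) (x : X) : ℝ := ∑ y, p x y

/-- marginal p(y) = ∑_x p(x,y) -/
noncomputable def pY (p : X → Y → ℝ) (y : Y) : ℝ := ∑ x, p x y

/-- marginal p(z) = ∑_x p(x) q(x,z) -/
noncomputable def pZ (p : X → Y → ℝ) (q : X → Z → ℝ) (z : Z) : ℝ := ∑ x, pX p x * q x z

/-- joint p(y,z) = ∑_x p(x,y) q(x,z) -/
noncomputable def pYZ (p : X → Y → ℝ) (q : X → Z → ℝ) (y : Y) (z : Z) : ℝ := ∑ x, p x y * q x z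

/-- A(r) = ∑_{x,z} p(x) q(x,z) r(x,z)² -/
noncomputable def termA (p : X → Y → ℝ) (q : X → Z → ℝ) (r : X → Z → ℝ) : ℝ :=
  ∑ x, ∑ z, pX p x * q x z * r x z ^ 2

/-- C(r) = ∑_z (∑_x p(x) q(x,z) r(x,z))² / p(z) -/
noncomputable def termC (p : X → Y → ℝ) (q : X → Z → ℝ) (r : X → Z → ℝ) : ℝ :=
  ∑ z, (∑ x, pX p x * q x z * r x z) ^ 2 / pZ p q z

/-- B(r) = ∑_{y,z} (∑_x p(x,y) q(x,z) r(x,z))² / p(y,z) -/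
noncomputable def termB (p : X → Y → ℝ) (q : X → Z → ℝ) (r : X → Z → ℝ) : ℝ :=
  ∑ y, ∑ z, (∑ x, p x y * q x z * r x z) ^ 2 / pYZ p q y z

/-- r̄(z) = (∑_x p(x) q(x,z) r(x,z)) / p(z) -/
noncomputable def rbarZ (p : X → Y → ℝ) (q : X → Z → ℝ) (r : X → Z → ℝ) (z : Z) : ℝ :=
  (∑ x, pX p x * q x z * r x z) / pZ p q z

/-- r̄(y,z) = (∑_x p(x,y) q(x,z) r(x,z)) / p(y,z) -/
noncomputable def rbarYZ (p : X → Y → ℝ) (q : X → Z → ℝ) (r : X → Z → ℝ) (y : Y) (z : Z) : ℝ :=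
  (∑ x, p x y * q x z * r x z) / pYZ p q y z

/-- perturbed marginal p_ε(z) -/
noncomputable def pZe (p : X → Y → ℝ) (q : X → Z → ℝ) (r : X → Z → ℝ) (ε : ℝ) (z : Z) : ℝ :=
  ∑ x, pX p x * (q x z * (1 + ε * r x z))

/-- perturbed joint p_ε(y,z) -/
noncomputable def pYZe (p : X → Y → ℝ) (q : X → Z → ℝ) (r : X → Z → ℝ) (ε : ℝ) (y : Y) (z : Z) : ℝ :=
  ∑ x, p x y * (q x z * (1 + ε * r x z))

/-- perturbed IB objective F(ε) = I_ε(X;Z) - β I_ε(Y;Z) -/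
noncomputable def IBfun (p : X → Y → ℝ) (q : X → Z → ℝ) (r : X → Z → ℝ) (β : ℝ) (ε : ℝ) : ℝ :=
  (∑ x, ∑ z, pX p x * (q x z * (1 + ε * r x z)) *
      Real.log (q x z * (1 + ε * r x z) / pZe p q r ε z))
    - β * ∑ y, ∑ z, pYZe p q r ε y z * Real.log (pYZe p q r ε y z / (pY p y * pZe p q r ε z))

noncomputable def phiC (c t : ℝ) : ℝ := (1 + c * t) * Real.log (1 + c * t)

section auxlem
open Topology Set

lemma phiC_contDiffAt (c : ℝ) {n : WithTop ℕ∞} : ContDiffAt ℝ n (phiC c) 0 := by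
  have h1 : ContDiffAt ℝ n (fun t : ℝ => 1 + c * t) 0 :=
    (contDiff_const.add (contDiff_const.mul contDiff_id)).contDiffAt
  have h2 : ContDiffAt ℝ n (fun t : ℝ => Real.log (1 + c * t)) 0 :=
    by have := (Real.contDiffAt_log.2 (by norm_num : (1 : ℝ) + c * 0 ≠ 0)).comp 0 h1; exact this
  exact h1.mul h2

lemma isOpen_posset (c : ℝ) : IsOpen {s : ℝ | 0 < 1 + c * s} :=
  isOpen_lt continuous_const (by continuity)

lemma hasDerivAt_affine (c t : ℝ) : HasDerivAt (fun s : ℝ => 1 + c * s) c t := by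
  simpa using ((hasDerivAt_id t).const_mul c).const_add 1

lemma invIter (a c : ℝ) : ∀ (k : ℕ) (t : ℝ), 0 < 1 + c * t →
    iteratedDeriv k (fun s => a * (1 + c * s)⁻¹) t
      = a * (-1) ^ k * (k.factorial : ℝ) * c ^ k * (1 + c * t) ^ (-(k + 1) : ℤ) := by
  intro k
  induction k with
  | zero => intro t ht; simp [_root_.zpow_neg]
  | succ k ih =>
    intro t ht
    have hev : iteratedDeriv k (fun s => a * (1 + c * s)⁻¹) =ᶠ[𝓝 t]
        fun s => a * (-1) ^ k * (k.factorial : ℝ) * c ^ k * (1 + c * s) ^ (-(k + 1) : ℤ) :=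
      Filter.eventuallyEq_of_mem ((isOpen_posset c).mem_nhds ht) (fun s hs => ih s hs)
    rw [iteratedDeriv_succ, hev.deriv_eq]
    have hne : (1 + c * t) ≠ 0 := ht.ne'
    have hz : HasDerivAt (fun s : ℝ => (1 + c * s) ^ (-(k + 1) : ℤ))
        (((-(k + 1) : ℤ) : ℝ) * (1 + c * t) ^ ((-(k + 1) : ℤ) - 1) * c) t := by
      simpa [Function.comp_def] using
        (hasDerivAt_zpow (-(k + 1) : ℤ) (1 + c * t) (Or.inl hne)).comp t (hasDerivAt_affine c t)
    rw [(hz.const_mul (a * (-1) ^ k * (k.factorial : ℝ) * c ^ k)).deriv]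
    have he : ((-(k + 1) : ℤ) - 1) = (-(k + 1 + 1) : ℤ) := by ring
    rw [he]
    have hf : ((k + 1).factorial : ℝ) = (k + 1) * (k.factorial : ℝ) := by
      rw [Nat.factorial_succ]; push_cast; ring
    push_cast [hf]
    ring

lemma hasDerivAt_logAffine {c s : ℝ} (hs : 0 < 1 + c * s) :
    HasDerivAt (fun u : ℝ => Real.log (1 + c * u)) ((1 + c * s)⁻¹ * c) s := by
  simpa [Function.comp_def] using (Real.hasDerivAt_log hs.ne').comp s (hasDerivAt_affine c s)

lemma phiC_deriv2_ev (c : ℝ) :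
    deriv (deriv (phiC c)) =ᶠ[𝓝 0] fun s => (c * c) * (1 + c * s)⁻¹ := by
  have h0 : (0 : ℝ) ∈ {s : ℝ | 0 < 1 + c * s} := by norm_num
  have hd1 : ∀ s ∈ {s : ℝ | 0 < 1 + c * s},
      deriv (phiC c) s = c * Real.log (1 + c * s) + c := by
    intro s hs
    have hs' : 0 < 1 + c * s := hs
    have h : HasDerivAt (phiC c)
        (c * Real.log (1 + c * s) + (1 + c * s) * ((1 + c * s)⁻¹ * c)) s :=
      (hasDerivAt_affine c s).mul (hasDerivAt_logAffine hs')
    rw [h.deriv]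
    field_simp
  have ev1 : deriv (phiC c) =ᶠ[𝓝 0] fun s => c * Real.log (1 + c * s) + c :=
    Filter.eventuallyEq_of_mem ((isOpen_posset c).mem_nhds h0) hd1
  refine ev1.deriv.trans (Filter.eventuallyEq_of_mem ((isOpen_posset c).mem_nhds h0) ?_)
  intro s hs
  have hs' : (0 : ℝ) < 1 + c * s := hs
  have h : HasDerivAt (fun u : ℝ => c * Real.log (1 + c * u) + c)
      (c * ((1 + c * s)⁻¹ * c)) s := ((hasDerivAt_logAffine hs').const_mul c).add_const c
  rw [h.deriv]; ring

lemma phiC_iteratedDeriv (c : ℝ) {n : ℕ} (hn : 2 ≤ n) :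
    iteratedDeriv n (phiC c) 0 = (-1) ^ n * ((n - 2).factorial : ℝ) * c ^ n := by
  obtain ⟨k, rfl⟩ : ∃ k, n = k + 2 := ⟨n - 2, by omega⟩
  rw [show k + 2 = k + 1 + 1 from rfl, iteratedDeriv_succ', iteratedDeriv_succ',
    Filter.EventuallyEq.iteratedDeriv_eq k (phiC_deriv2_ev c),
    invIter (c * c) c k 0 (by norm_num)]
  simp only [mul_zero, add_zero, _root_.one_zpow, mul_one, Nat.add_sub_cancel]
  rw [show (-1 : ℝ) ^ (k + 1 + 1) = (-1) ^ k by rw [pow_succ, pow_succ]; ring,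
    show k + 1 + 1 - 2 = k from by omega]
  ring

lemma iteratedDerivWithin_isOpen_eq {n : ℕ} {f : ℝ → ℝ} {s : Set ℝ}
    (hs : IsOpen s) {x : ℝ} (hx : x ∈ s) :
    iteratedDerivWithin n f s x = iteratedDeriv n f x := by
  rw [iteratedDerivWithin, iteratedDeriv, iteratedFDerivWithin_of_isOpen n hs hx]

lemma itd_add_at {n : ℕ} {f g : ℝ → ℝ} {x : ℝ}
    (hf : ContDiffAt ℝ n f x) (hg : ContDiffAt ℝ n g x) :
    iteratedDeriv n (fun y => f y + g y) x = iteratedDeriv n f x + iteratedDeriv n g x := by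
  obtain ⟨u, hu, hfu⟩ := hf.contDiffOn le_rfl (by simp)
  obtain ⟨v, hv, hgv⟩ := hg.contDiffOn le_rfl (by simp)
  have hxw : x ∈ interior (u ∩ v) := by
    rw [mem_interior_iff_mem_nhds]; exact Filter.inter_mem hu hv
  have hw : IsOpen (interior (u ∩ v)) := isOpen_interior
  have h1 : ContDiffOn ℝ n f (interior (u ∩ v)) :=
    hfu.mono (interior_subset.trans inter_subset_left)
  have h2 : ContDiffOn ℝ n g (interior (u ∩ v)) :=
    hgv.mono (interior_subset.trans inter_subset_right)
  rw [← iteratedDerivWithin_isOpen_eq hw hxw (f := fun y => f y + g y),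
    ← iteratedDerivWithin_isOpen_eq hw hxw (f := f),
    ← iteratedDerivWithin_isOpen_eq hw hxw (f := g)]
  exact iteratedDerivWithin_add hxw hw.uniqueDiffOn (h1 x hxw) (h2 x hxw)

lemma itd_const_mul_at {n : ℕ} {f : ℝ → ℝ} {x : ℝ} (c : ℝ) (hf : ContDiffAt ℝ n f x) :
    iteratedDeriv n (fun y => c * f y) x = c * iteratedDeriv n f x := by
  obtain ⟨u, hu, hfu⟩ := hf.contDiffOn le_rfl (by simp)
  have hxw : x ∈ interior u := by rw [mem_interior_iff_mem_nhds]; exact hu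
  have hw : IsOpen (interior u) := isOpen_interior
  rw [← iteratedDerivWithin_isOpen_eq hw hxw (f := fun y => c * f y),
    ← iteratedDerivWithin_isOpen_eq hw hxw (f := f)]
  exact iteratedDerivWithin_const_mul hxw hw.uniqueDiffOn c ((hfu.mono interior_subset) x hxw)

lemma itd_zero_fun (n : ℕ) (x : ℝ) : iteratedDeriv n (fun _ : ℝ => (0 : ℝ)) x = 0 := by
  induction n generalizing x with
  | zero => simp
  | succ k ih => rw [iteratedDeriv_succ', deriv_const']; exact ih x

lemma itd_sum_at {ι : Type*} {n : ℕ} {x : ℝ} (s : Finset ι) (f : ι → ℝ → ℝ)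
    (h : ∀ i ∈ s, ContDiffAt ℝ n (f i) x) :
    iteratedDeriv n (fun y => ∑ i ∈ s, f i y) x = ∑ i ∈ s, iteratedDeriv n (f i) x := by
  classical
  induction s using Finset.induction_on with
  | empty => simpa using itd_zero_fun n x
  | insert a s' hi ih =>
    rw [Finset.sum_insert hi]
    have := itd_add_at (h a (Finset.mem_insert_self a s'))
      (ContDiffAt.sum (fun i hi' => h i (Finset.mem_insert_of_mem hi')))
    simp only [Finset.sum_insert hi] at *
    rw [this, ih (fun i hi' => h i (Finset.mem_insert_of_mem hi'))]

lemma itd_sub_at {n : ℕ} {f g : ℝ → ℝ} {x : ℝ}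
    (hf : ContDiffAt ℝ n f x) (hg : ContDiffAt ℝ n g x) :
    iteratedDeriv n (fun y => f y - g y) x = iteratedDeriv n f x - iteratedDeriv n g x := by
  have h1 : iteratedDeriv n (fun y => f y + (-1) * g y) x
      = iteratedDeriv n f x + iteratedDeriv n (fun y => (-1) * g y) x :=
    itd_add_at hf (contDiffAt_const.mul hg)
  have h2 := itd_const_mul_at (-1) hg
  simp only [neg_one_mul] at h1 h2
  calc iteratedDeriv n (fun y => f y - g y) x
      = iteratedDeriv n (fun y => f y + -g y) x := by simp [sub_eq_add_neg]
    _ = iteratedDeriv n f x - iteratedDeriv n g x := by rw [h1, h2]; ring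

lemma itd_affine {n : ℕ} (hn : 2 ≤ n) (a b x : ℝ) :
    iteratedDeriv n (fun ε : ℝ => a + b * ε) x = 0 := by
  obtain ⟨k, rfl⟩ : ∃ k, n = k + 2 := ⟨n - 2, by omega⟩
  rw [show k + 2 = k + 1 + 1 from rfl, iteratedDeriv_succ']
  have h1 : deriv (fun ε : ℝ => a + b * ε) = fun _ => b := by
    funext t
    simpa using (((hasDerivAt_id t).const_mul b).const_add a).deriv
  rw [h1, iteratedDeriv_succ', deriv_const']
  exact itd_zero_fun k x

end auxlem

noncomputable def Gfun (p : X → Y → ℝ) (q : X → Z → ℝ) (r : X → Z → ℝ) (β : ℝ) (ε : ℝ) : ℝ :=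
  ((∑ x, ∑ z, pX p x * q x z * (Real.log (q x z) - Real.log (pZ p q z)))
      - β * ∑ y, ∑ z, pYZ p q y z *
          (Real.log (pYZ p q y z) - Real.log (pY p y) - Real.log (pZ p q z)))
    + ((∑ x, ∑ z, pX p x * q x z * r x z * (Real.log (q x z) - Real.log (pZ p q z)))
      - β * ∑ y, ∑ z, pYZ p q y z * rbarYZ p q r y z *
          (Real.log (pYZ p q y z) - Real.log (pY p y) - Real.log (pZ p q z))) * ε
    + ((∑ x, ∑ z, pX p x * q x z * phiC (r x z) ε)
        - ∑ z, pZ p q z * phiC (rbarZ p q r z) ε)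
    - β * ((∑ y, ∑ z, pYZ p q y z * phiC (rbarYZ p q r y z) ε)
        - ∑ z, pZ p q z * phiC (rbarZ p q r z) ε)

section IBeq

variable [Nonempty X] [Nonempty Y] [Nonempty Z]

lemma IB_eq_G (p : X → Y → ℝ) (q : X → Z → ℝ) (r : X → Z → ℝ) (β : ℝ)
    (hp : ∀ x y, 0 < p x y) (hq : ∀ x z, 0 < q x z) :
    ∀ ε : ℝ, (∀ x z, 0 < 1 + ε * r x z) → IBfun p q r β ε = Gfun p q r β ε := by
  intro ε hε
  have hpx : ∀ x, 0 < pX p x := fun x => Finset.sum_pos (fun y _ => hp x y) univ_nonempty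
  have hpy : ∀ y, 0 < pY p y := fun y => Finset.sum_pos (fun x _ => hp x y) univ_nonempty
  have hpz : ∀ z, 0 < pZ p q z :=
    fun z => Finset.sum_pos (fun x _ => mul_pos (hpx x) (hq x z)) univ_nonempty
  have hpyz : ∀ y z, 0 < pYZ p q y z :=
    fun y z => Finset.sum_pos (fun x _ => mul_pos (hp x y) (hq x z)) univ_nonempty
  have hSz : ∀ z, ∑ x, pX p x * q x z * r x z = pZ p q z * rbarZ p q r z := by
    intro z; rw [rbarZ, mul_comm, div_mul_cancel₀ _ (hpz z).ne']
  have hSyz : ∀ y z, ∑ x, p x y * q x z * r x z = pYZ p q y z * rbarYZ p q r y z := by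
    intro y z; rw [rbarYZ, mul_comm, div_mul_cancel₀ _ (hpyz y z).ne']
  have hZe : ∀ z, pZe p q r ε z = pZ p q z * (1 + rbarZ p q r z * ε) := by
    intro z
    have h1 : pZe p q r ε z = (∑ x, pX p x * q x z) + ε * ∑ x, pX p x * q x z * r x z := by
      rw [pZe, Finset.mul_sum, ← Finset.sum_add_distrib]
      exact Finset.sum_congr rfl fun x _ => by ring
    rw [h1, hSz z, show (∑ x, pX p x * q x z) = pZ p q z from rfl]
    ring
  have hYZe : ∀ y z, pYZe p q r ε y z = pYZ p q y z * (1 + rbarYZ p q r y z * ε) := by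
    intro y z
    have h1 : pYZe p q r ε y z = (∑ x, p x y * q x z) + ε * ∑ x, p x y * q x z * r x z := by
      rw [pYZe, Finset.mul_sum, ← Finset.sum_add_distrib]
      exact Finset.sum_congr rfl fun x _ => by ring
    rw [h1, hSyz y z, show (∑ x, p x y * q x z) = pYZ p q y z from rfl]
    ring
  have hZe' : ∀ z, 0 < pZe p q r ε z := fun z =>
    Finset.sum_pos (fun x _ => mul_pos (hpx x) (mul_pos (hq x z) (hε x z))) univ_nonempty
  have hYZe' : ∀ y z, 0 < pYZe p q r ε y z := fun y z =>
    Finset.sum_pos (fun x _ => mul_pos (hp x y) (mul_pos (hq x z) (hε x z))) univ_nonempty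
  have hZ1 : ∀ z, 0 < 1 + rbarZ p q r z * ε := by
    intro z
    have h1 := hZe' z
    rw [hZe z] at h1
    have h2 := div_pos h1 (hpz z)
    rwa [mul_div_cancel_left₀ _ (hpz z).ne'] at h2
  have hYZ1 : ∀ y z, 0 < 1 + rbarYZ p q r y z * ε := by
    intro y z
    have h1 := hYZe' y z
    rw [hYZe y z] at h1
    have h2 := div_pos h1 (hpyz y z)
    rwa [mul_div_cancel_left₀ _ (hpyz y z).ne'] at h2
  -- T1
  have hD1 : ∑ x, ∑ z, pX p x * (q x z * (1 + r x z * ε)) * Real.log (1 + rbarZ p q r z * ε)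
      = ∑ z, pZ p q z * phiC (rbarZ p q r z) ε := by
    rw [Finset.sum_comm]
    refine Finset.sum_congr rfl fun z _ => ?_
    rw [← Finset.sum_mul]
    have h1 : (∑ x, pX p x * (q x z * (1 + r x z * ε)))
        = pZ p q z * (1 + rbarZ p q r z * ε) := by
      rw [← hZe z, pZe]
      exact Finset.sum_congr rfl fun x _ => by ring
    rw [h1, phiC]; ring
  have hT1 : (∑ x, ∑ z, pX p x * (q x z * (1 + ε * r x z)) *
        Real.log (q x z * (1 + ε * r x z) / pZe p q r ε z))
      = (∑ x, ∑ z, pX p x * q x z * (Real.log (q x z) - Real.log (pZ p q z)))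
        + (∑ x, ∑ z, pX p x * q x z * r x z * (Real.log (q x z) - Real.log (pZ p q z))) * ε
        + ((∑ x, ∑ z, pX p x * q x z * phiC (r x z) ε)
            - ∑ z, pZ p q z * phiC (rbarZ p q r z) ε) := by
    have step : ∀ x z, pX p x * (q x z * (1 + ε * r x z)) *
          Real.log (q x z * (1 + ε * r x z) / pZe p q r ε z)
        = pX p x * q x z * (Real.log (q x z) - Real.log (pZ p q z))
          + pX p x * q x z * r x z * (Real.log (q x z) - Real.log (pZ p q z)) * ε
          + pX p x * q x z * phiC (r x z) ε
          - pX p x * (q x z * (1 + r x z * ε)) * Real.log (1 + rbarZ p q r z * ε) := by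
      intro x z
      have h1 : (0 : ℝ) < 1 + ε * r x z := hε x z
      rw [show (1 : ℝ) + ε * r x z = 1 + r x z * ε by ring] at h1 ⊢
      rw [hZe z, Real.log_div (mul_pos (hq x z) h1).ne' (mul_pos (hpz z) (hZ1 z)).ne',
        Real.log_mul (hq x z).ne' h1.ne', Real.log_mul (hpz z).ne' (hZ1 z).ne', phiC]
      ring
    calc (∑ x, ∑ z, pX p x * (q x z * (1 + ε * r x z)) *
          Real.log (q x z * (1 + ε * r x z) / pZe p q r ε z))
        = ∑ x, ∑ z, (pX p x * q x z * (Real.log (q x z) - Real.log (pZ p q z))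
          + pX p x * q x z * r x z * (Real.log (q x z) - Real.log (pZ p q z)) * ε
          + pX p x * q x z * phiC (r x z) ε
          - pX p x * (q x z * (1 + r x z * ε)) * Real.log (1 + rbarZ p q r z * ε)) :=
          Finset.sum_congr rfl fun x _ => Finset.sum_congr rfl fun z _ => step x z
      _ = (∑ x, ∑ z, pX p x * q x z * (Real.log (q x z) - Real.log (pZ p q z)))
        + (∑ x, ∑ z, pX p x * q x z * r x z * (Real.log (q x z) - Real.log (pZ p q z))) * ε
        + ((∑ x, ∑ z, pX p x * q x z * phiC (r x z) ε)
            - ∑ x, ∑ z, pX p x * (q x z * (1 + r x z * ε)) * Real.log (1 + rbarZ p q r z * ε)) := by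
          simp only [Finset.sum_add_distrib, Finset.sum_sub_distrib, ← Finset.sum_mul]
          ring
      _ = _ := by rw [hD1]
  -- T2
  have hD2 : ∑ y, ∑ z, pYZ p q y z * (1 + rbarYZ p q r y z * ε) * Real.log (1 + rbarZ p q r z * ε)
      = ∑ z, pZ p q z * phiC (rbarZ p q r z) ε := by
    rw [Finset.sum_comm]
    refine Finset.sum_congr rfl fun z _ => ?_
    rw [← Finset.sum_mul]
    have h1 : (∑ y, pYZ p q y z * (1 + rbarYZ p q r y z * ε))
        = pZ p q z * (1 + rbarZ p q r z * ε) := by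
      have h2 : (∑ y, pYZ p q y z * (1 + rbarYZ p q r y z * ε)) = ∑ y, pYZe p q r ε y z :=
        Finset.sum_congr rfl fun y _ => (hYZe y z).symm
      have h3 : (∑ y, pYZe p q r ε y z) = pZe p q r ε z := by
        calc (∑ y, pYZe p q r ε y z) = ∑ y, ∑ x, p x y * (q x z * (1 + ε * r x z)) := rfl
          _ = ∑ x, ∑ y, p x y * (q x z * (1 + ε * r x z)) := Finset.sum_comm
          _ = ∑ x, pX p x * (q x z * (1 + ε * r x z)) :=
              Finset.sum_congr rfl fun x _ => by rw [← Finset.sum_mul, pX]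
          _ = pZe p q r ε z := rfl
      rw [h2, h3, hZe z]
    rw [h1, phiC]; ring
  have hT2 : (∑ y, ∑ z, pYZe p q r ε y z *
        Real.log (pYZe p q r ε y z / (pY p y * pZe p q r ε z)))
      = (∑ y, ∑ z, pYZ p q y z *
            (Real.log (pYZ p q y z) - Real.log (pY p y) - Real.log (pZ p q z)))
        + (∑ y, ∑ z, pYZ p q y z * rbarYZ p q r y z *
            (Real.log (pYZ p q y z) - Real.log (pY p y) - Real.log (pZ p q z))) * ε
        + ((∑ y, ∑ z, pYZ p q y z * phiC (rbarYZ p q r y z) ε)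
            - ∑ z, pZ p q z * phiC (rbarZ p q r z) ε) := by
    have step : ∀ y z, pYZe p q r ε y z *
          Real.log (pYZe p q r ε y z / (pY p y * pZe p q r ε z))
        = pYZ p q y z * (Real.log (pYZ p q y z) - Real.log (pY p y) - Real.log (pZ p q z))
          + pYZ p q y z * rbarYZ p q r y z *
              (Real.log (pYZ p q y z) - Real.log (pY p y) - Real.log (pZ p q z)) * ε
          + pYZ p q y z * phiC (rbarYZ p q r y z) ε
          - pYZ p q y z * (1 + rbarYZ p q r y z * ε) * Real.log (1 + rbarZ p q r z * ε) := by
      intro y z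
      rw [hYZe y z, hZe z,
        Real.log_div (mul_pos (hpyz y z) (hYZ1 y z)).ne'
          (mul_pos (hpy y) (mul_pos (hpz z) (hZ1 z))).ne',
        Real.log_mul (hpyz y z).ne' (hYZ1 y z).ne',
        Real.log_mul (hpy y).ne' (mul_pos (hpz z) (hZ1 z)).ne',
        Real.log_mul (hpz z).ne' (hZ1 z).ne', phiC]
      ring
    calc (∑ y, ∑ z, pYZe p q r ε y z *
          Real.log (pYZe p q r ε y z / (pY p y * pZe p q r ε z)))
        = ∑ y, ∑ z, (pYZ p q y z * (Real.log (pYZ p q y z) - Real.log (pY p y) - Real.log (pZ p q z))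
          + pYZ p q y z * rbarYZ p q r y z *
              (Real.log (pYZ p q y z) - Real.log (pY p y) - Real.log (pZ p q z)) * ε
          + pYZ p q y z * phiC (rbarYZ p q r y z) ε
          - pYZ p q y z * (1 + rbarYZ p q r y z * ε) * Real.log (1 + rbarZ p q r z * ε)) :=
          Finset.sum_congr rfl fun y _ => Finset.sum_congr rfl fun z _ => step y z
      _ = (∑ y, ∑ z, pYZ p q y z *
            (Real.log (pYZ p q y z) - Real.log (pY p y) - Real.log (pZ p q z)))
        + (∑ y, ∑ z, pYZ p q y z * rbarYZ p q r y z *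
            (Real.log (pYZ p q y z) - Real.log (pY p y) - Real.log (pZ p q z))) * ε
        + ((∑ y, ∑ z, pYZ p q y z * phiC (rbarYZ p q r y z) ε)
            - ∑ y, ∑ z, pYZ p q y z * (1 + rbarYZ p q r y z * ε) *
                Real.log (1 + rbarZ p q r z * ε)) := by
          simp only [Finset.sum_add_distrib, Finset.sum_sub_distrib, ← Finset.sum_mul]
          ring
      _ = _ := by rw [hD2]
  rw [IBfun, Gfun, hT1, hT2]
  ring

end IBeq

lemma G_contDiffAt (p : X → Y → ℝ) (q : X → Z → ℝ) (r : X → Z → ℝ) (β : ℝ)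
    {m : WithTop ℕ∞} : ContDiffAt ℝ m (Gfun p q r β) 0 := by
  show ContDiffAt ℝ m (fun ε : ℝ =>
    ((∑ x, ∑ z, pX p x * q x z * (Real.log (q x z) - Real.log (pZ p q z)))
      - β * ∑ y, ∑ z, pYZ p q y z *
          (Real.log (pYZ p q y z) - Real.log (pY p y) - Real.log (pZ p q z)))
    + ((∑ x, ∑ z, pX p x * q x z * r x z * (Real.log (q x z) - Real.log (pZ p q z)))
      - β * ∑ y, ∑ z, pYZ p q y z * rbarYZ p q r y z *
          (Real.log (pYZ p q y z) - Real.log (pY p y) - Real.log (pZ p q z))) * ε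
    + ((∑ x, ∑ z, pX p x * q x z * phiC (r x z) ε)
        - ∑ z, pZ p q z * phiC (rbarZ p q r z) ε)
    - β * ((∑ y, ∑ z, pYZ p q y z * phiC (rbarYZ p q r y z) ε)
        - ∑ z, pZ p q z * phiC (rbarZ p q r z) ε)) 0
  have hS1 : ContDiffAt ℝ m (fun ε : ℝ => ∑ x, ∑ z, pX p x * q x z * phiC (r x z) ε) 0 :=
    ContDiffAt.sum fun x _ => ContDiffAt.sum fun z _ => contDiffAt_const.mul (phiC_contDiffAt _)
  have hS2 : ContDiffAt ℝ m (fun ε : ℝ => ∑ z, pZ p q z * phiC (rbarZ p q r z) ε) 0 :=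
    ContDiffAt.sum fun z _ => contDiffAt_const.mul (phiC_contDiffAt _)
  have hS3 : ContDiffAt ℝ m (fun ε : ℝ => ∑ y, ∑ z, pYZ p q y z * phiC (rbarYZ p q r y z) ε) 0 :=
    ContDiffAt.sum fun y _ => ContDiffAt.sum fun z _ => contDiffAt_const.mul (phiC_contDiffAt _)
  exact (((contDiffAt_const.add (contDiffAt_const.mul contDiffAt_id)).add
    (hS1.sub hS2)).sub (contDiffAt_const.mul (hS3.sub hS2)))

lemma itd_combo {n : ℕ} (hn : 2 ≤ n) (c0 c1 β : ℝ) (S1 S2 S3 : ℝ → ℝ)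
    (h1 : ContDiffAt ℝ n S1 0) (h2 : ContDiffAt ℝ n S2 0) (h3 : ContDiffAt ℝ n S3 0) :
    iteratedDeriv n (fun ε => c0 + c1 * ε + (S1 ε - S2 ε) - β * (S3 ε - S2 ε)) 0
      = (iteratedDeriv n S1 0 - iteratedDeriv n S2 0)
        - β * (iteratedDeriv n S3 0 - iteratedDeriv n S2 0) := by
  have hb : ContDiffAt ℝ n (fun ε : ℝ => c0 + c1 * ε) 0 :=
    contDiffAt_const.add (contDiffAt_const.mul contDiffAt_id)
  have e1 : iteratedDeriv n (fun ε => c0 + c1 * ε + (S1 ε - S2 ε) - β * (S3 ε - S2 ε)) 0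
      = iteratedDeriv n (fun ε => c0 + c1 * ε + (S1 ε - S2 ε)) 0
        - iteratedDeriv n (fun ε => β * (S3 ε - S2 ε)) 0 :=
    itd_sub_at (hb.add (h1.sub h2)) (contDiffAt_const.mul (h3.sub h2))
  have e2 : iteratedDeriv n (fun ε => c0 + c1 * ε + (S1 ε - S2 ε)) 0
      = iteratedDeriv n (fun ε : ℝ => c0 + c1 * ε) 0
        + iteratedDeriv n (fun ε => S1 ε - S2 ε) 0 :=
    itd_add_at hb (h1.sub h2)
  have e3 : iteratedDeriv n (fun ε => S1 ε - S2 ε) 0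
      = iteratedDeriv n S1 0 - iteratedDeriv n S2 0 := itd_sub_at h1 h2
  have e4 : iteratedDeriv n (fun ε => β * (S3 ε - S2 ε)) 0
      = β * (iteratedDeriv n S3 0 - iteratedDeriv n S2 0) := by
    rw [itd_const_mul_at β (h3.sub h2), itd_sub_at h3 h2]
  rw [e1, e2, e3, e4, itd_affine hn]
  ring

lemma G_itd (p : X → Y → ℝ) (q : X → Z → ℝ) (r : X → Z → ℝ) (β : ℝ)
    {n : ℕ} (hn : 2 ≤ n) :
    iteratedDeriv n (Gfun p q r β) 0 =
      (-1 : ℝ) ^ n * ((n - 2).factorial : ℝ) *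
        (((∑ x, ∑ z, pX p x * q x z * r x z ^ n) - ∑ z, pZ p q z * rbarZ p q r z ^ n)
          - β * ((∑ y, ∑ z, pYZ p q y z * rbarYZ p q r y z ^ n)
              - ∑ z, pZ p q z * rbarZ p q r z ^ n)) := by
  have hc : ∀ c : ℝ, ContDiffAt ℝ n (phiC c) 0 := fun c => phiC_contDiffAt c
  have hv : ∀ (a c : ℝ), iteratedDeriv n (fun ε => a * phiC c ε) 0
      = a * ((-1) ^ n * ((n - 2).factorial : ℝ) * c ^ n) := by
    intro a c
    rw [itd_const_mul_at a (hc c), phiC_iteratedDeriv c hn]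
  have hS1 : ContDiffAt ℝ n (fun ε : ℝ => ∑ x, ∑ z, pX p x * q x z * phiC (r x z) ε) 0 :=
    ContDiffAt.sum fun x _ => ContDiffAt.sum fun z _ => contDiffAt_const.mul (hc _)
  have hS2 : ContDiffAt ℝ n (fun ε : ℝ => ∑ z, pZ p q z * phiC (rbarZ p q r z) ε) 0 :=
    ContDiffAt.sum fun z _ => contDiffAt_const.mul (hc _)
  have hS3 : ContDiffAt ℝ n (fun ε : ℝ => ∑ y, ∑ z, pYZ p q y z * phiC (rbarYZ p q r y z) ε) 0 :=
    ContDiffAt.sum fun y _ => ContDiffAt.sum fun z _ => contDiffAt_const.mul (hc _)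
  have hv1 : iteratedDeriv n (fun ε : ℝ => ∑ x, ∑ z, pX p x * q x z * phiC (r x z) ε) 0
      = (-1) ^ n * ((n - 2).factorial : ℝ) * ∑ x, ∑ z, pX p x * q x z * r x z ^ n := by
    refine (itd_sum_at Finset.univ (fun x ε => ∑ z, pX p x * q x z * phiC (r x z) ε)
      (fun x _ => ContDiffAt.sum fun z _ => contDiffAt_const.mul (hc _))).trans ?_
    rw [Finset.mul_sum]
    refine Finset.sum_congr rfl fun x _ => ?_
    refine (itd_sum_at Finset.univ (fun z ε => pX p x * q x z * phiC (r x z) ε)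
      (fun z _ => contDiffAt_const.mul (hc _))).trans ?_
    rw [Finset.mul_sum]
    exact Finset.sum_congr rfl fun z _ => by rw [hv]; ring
  have hv2 : iteratedDeriv n (fun ε : ℝ => ∑ z, pZ p q z * phiC (rbarZ p q r z) ε) 0
      = (-1) ^ n * ((n - 2).factorial : ℝ) * ∑ z, pZ p q z * rbarZ p q r z ^ n := by
    refine (itd_sum_at Finset.univ (fun z ε => pZ p q z * phiC (rbarZ p q r z) ε)
      (fun z _ => contDiffAt_const.mul (hc _))).trans ?_
    rw [Finset.mul_sum]
    exact Finset.sum_congr rfl fun z _ => by rw [hv]; ring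
  have hv3 : iteratedDeriv n (fun ε : ℝ => ∑ y, ∑ z, pYZ p q y z * phiC (rbarYZ p q r y z) ε) 0
      = (-1) ^ n * ((n - 2).factorial : ℝ) * ∑ y, ∑ z, pYZ p q y z * rbarYZ p q r y z ^ n := by
    refine (itd_sum_at Finset.univ (fun y ε => ∑ z, pYZ p q y z * phiC (rbarYZ p q r y z) ε)
      (fun y _ => ContDiffAt.sum fun z _ => contDiffAt_const.mul (hc _))).trans ?_
    rw [Finset.mul_sum]
    refine Finset.sum_congr rfl fun y _ => ?_
    refine (itd_sum_at Finset.univ (fun z ε => pYZ p q y z * phiC (rbarYZ p q r y z) ε)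
      (fun z _ => contDiffAt_const.mul (hc _))).trans ?_
    rw [Finset.mul_sum]
    exact Finset.sum_congr rfl fun z _ => by rw [hv]; ring
  have e := itd_combo hn
    ((∑ x, ∑ z, pX p x * q x z * (Real.log (q x z) - Real.log (pZ p q z)))
      - β * ∑ y, ∑ z, pYZ p q y z *
          (Real.log (pYZ p q y z) - Real.log (pY p y) - Real.log (pZ p q z)))
    ((∑ x, ∑ z, pX p x * q x z * r x z * (Real.log (q x z) - Real.log (pZ p q z)))
      - β * ∑ y, ∑ z, pYZ p q y z * rbarYZ p q r y z *
          (Real.log (pYZ p q y z) - Real.log (pY p y) - Real.log (pZ p q z))) β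
    (fun ε : ℝ => ∑ x, ∑ z, pX p x * q x z * phiC (r x z) ε)
    (fun ε : ℝ => ∑ z, pZ p q z * phiC (rbarZ p q r z) ε)
    (fun ε : ℝ => ∑ y, ∑ z, pYZ p q y z * phiC (rbarYZ p q r y z) ε)
    hS1 hS2 hS3
  refine Eq.trans ?_ (e.trans ?_)
  · rfl
  · rw [hv1, hv2, hv3]; ring

/-- Lemma A.1: variation of the IB objective at every order n ≥ 2. -/
theorem nth_variation_IB [Nonempty X] [Nonempty Y] [Nonempty Z]
    (p : X → Y → ℝ) (q : X → Z → ℝ)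
    (hp : ∀ x y, 0 < p x y) (hpsum : ∑ x, ∑ y, p x y = 1)
    (hq : ∀ x z, 0 < q x z) (hqsum : ∀ x, ∑ z, q x z = 1)
    (β : ℝ) (r : X → Z → ℝ) (hr : ∀ x, ∑ z, q x z * r x z = 0)
    (n : ℕ) (hn : 2 ≤ n) :
    ContDiffAt ℝ n (IBfun p q r β) 0 ∧
    iteratedDeriv n (IBfun p q r β) 0 =
      (-1 : ℝ) ^ n * ((n - 2).factorial : ℝ) *
        (((∑ x, ∑ z, pX p x * q x z * r x z ^ n) - ∑ z, pZ p q z * rbarZ p q r z ^ n)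
          - β * ((∑ y, ∑ z, pYZ p q y z * rbarYZ p q r y z ^ n)
              - ∑ z, pZ p q z * rbarZ p q r z ^ n)) := by
  have hev : ∀ᶠ ε : ℝ in nhds 0, ∀ x z, 0 < 1 + ε * r x z := by
    rw [Filter.eventually_all]
    intro x
    rw [Filter.eventually_all]
    intro z
    have ht : Filter.Tendsto (fun ε : ℝ => 1 + ε * r x z) (nhds 0) (nhds 1) := by
      have h1 : Continuous fun ε : ℝ => 1 + ε * r x z := by continuity
      simpa using h1.tendsto 0
    exact ht.eventually (eventually_gt_nhds one_pos)
  have heq : IBfun p q r β =ᶠ[nhds 0] Gfun p q r β :=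
    hev.mono fun ε h => IB_eq_G p q r β hp hq ε h
  constructor
  · exact (G_contDiffAt p q r β).congr_of_eventuallyEq heq
  · rw [heq.iteratedDeriv_eq n, G_itd p q r β hn]
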